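/- Let G be an abelian group, n ≥ 1, and let f : G → ℂ be a generalized polynomial of degree n with canonical representation f(x) = A_n(x,…,x) + A_{n−1}(x,…,x) + ⋯ + A_1(x) + C, where each A_k : G^k → ℂ is symmetric and k-additive and C is a constant. Then for all y_2,…,y_n in G the additive function x ↦ A_n(x, y_2,…,y_n) belongs to the variety τ(f). -/

import Mathlib

/-- The difference operator: `(Δ_y f)(x) = f(x+y) - f(x)`. -/
def diffOp {G : Type*} [AddCommGroup G] (y : G) (f : G → ℂ) : G → ℂ :=
  fun x => f (x + y) - f x

/-- `f` is a generalized polynomial: some iterated difference of order `n+1` always vanishes. -/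
def IsGenPoly {G : Type*} [AddCommGroup G] (f : G → ℂ) : Prop :=
  ∃ n : ℕ, ∀ ys : List G, ys.length = n + 1 → ys.foldr diffOp f = 0

/-- An additive function is a homomorphism of `G` into `(ℂ, +)`. -/
def IsAdditiveFn {G : Type*} [AddCommGroup G] (a : G → ℂ) : Prop :=
  ∀ x y : G, a (x + y) = a x + a y

/-- `f` is a polynomial: it belongs to the complex function algebra generated by the
additive functions (constants lie in every subalgebra). -/
def IsPolyFn {G : Type*} [AddCommGroup G] (f : G → ℂ) : Prop :=
  f ∈ Algebra.adjoin ℂ {a : G → ℂ | IsAdditiveFn a}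

/-- The variety `τ(f)`: smallest translation-invariant linear subspace of `ℂ^G`
containing `f` which is closed under pointwise convergence. -/
noncomputable def variety {G : Type*} [AddCommGroup G] (f : G → ℂ) :
    Submodule ℂ (G → ℂ) :=
  (Submodule.span ℂ {g : G → ℂ | ∃ y : G, g = fun x => f (x + y)}).topologicalClosure

/-- `A` is `k`-additive: additive in each variable separately. -/
def IsMultiadditive {G : Type*} [AddCommGroup G] {k : ℕ} (A : (Fin k → G) → ℂ) : Prop :=
  ∀ (v : Fin k → G) (i : Fin k) (x y : G),
    A (Function.update v i (x + y)) = A (Function.update v i x) + A (Function.update v i y)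

/-- `A` is symmetric: invariant under permutations of its arguments. -/
def IsSymmetricFn {G : Type*} [AddCommGroup G] {k : ℕ} (A : (Fin k → G) → ℂ) : Prop :=
  ∀ (v : Fin k → G) (σ : Equiv.Perm (Fin k)), A (v ∘ σ) = A v


section Aux
variable {G : Type*} [AddCommGroup G]

/-- Generators: sections of multilinear maps that are "diagonal of degree ≤ m". -/
def Gen (G : Type*) [AddCommGroup G] (m : ℕ) : Set (G → ℂ) :=
  {g | ∃ (k : ℕ) (B : MultilinearMap ℤ (fun _ : Fin k => G) ℂ)
        (S : Finset (Fin k)) (w : Fin k → G),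
      S.card ≤ m ∧ g = fun x => B (S.piecewise (fun _ => x) w)}

lemma gen_mono {m m' : ℕ} (h : m ≤ m') : Gen G m ⊆ Gen G m' := by
  rintro g ⟨k, B, S, w, hc, rfl⟩
  exact ⟨k, B, S, w, hc.trans h, rfl⟩

lemma diffOp_add (a : G) (g h : G → ℂ) :
    diffOp a (g + h) = diffOp a g + diffOp a h := by
  funext x; simp [diffOp]; ring

lemma diffOp_smul (a : G) (c : ℂ) (g : G → ℂ) :
    diffOp a (c • g) = c • diffOp a g := by
  funext x; simp [diffOp]; ring

lemma diffOp_zero (a : G) : diffOp a (0 : G → ℂ) = 0 := by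
  funext x; simp [diffOp]

/-- turn an `IsMultiadditive` function into a `ℤ`-multilinear map -/
def mkML {k : ℕ} {A : (Fin k → G) → ℂ} (hA : IsMultiadditive A) :
    MultilinearMap ℤ (fun _ : Fin k => G) ℂ where
  toFun := A
  map_update_add' {dec} v i x y := by
    obtain rfl := Subsingleton.elim dec (instDecidableEqFin k)
    exact hA v i x y
  map_update_smul' {dec} v i c x := by
    obtain rfl := Subsingleton.elim dec (instDecidableEqFin k)
    have hg : ∀ t : G, (AddMonoidHom.mk' (fun t => A (Function.update v i t))
        (fun a b => hA v i a b)) t = A (Function.update v i t) := fun _ => rfl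
    rw [← hg, ← hg, map_zsmul]

@[simp] lemma mkML_apply {k : ℕ} {A : (Fin k → G) → ℂ} (hA : IsMultiadditive A)
    (v : Fin k → G) : mkML hA v = A v := rfl

/-- key expansion : one difference of a generator is a sum of lower generators. -/
lemma diffOp_gen_eq (a : G) {k : ℕ} (B : MultilinearMap ℤ (fun _ : Fin k => G) ℂ)
    (S : Finset (Fin k)) (w : Fin k → G) :
    diffOp a (fun x => B (S.piecewise (fun _ => x) w))
      = ∑ s ∈ S.powerset.erase S,
          (fun x => B (s.piecewise (fun _ => x) (S.piecewise (fun _ => a) w))) := by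
  funext x
  have h1 : S.piecewise (fun _ => x + a) w
      = S.piecewise ((fun _ => x) + (S.piecewise (fun _ => a) w)) (S.piecewise (fun _ => a) w) := by
    ext j
    by_cases hj : j ∈ S <;> simp [Finset.piecewise, hj]
  have h2 := B.map_piecewise_add (fun _ => x) (S.piecewise (fun _ => a) w) S
  have h3 : B (S.piecewise (fun _ => x) (S.piecewise (fun _ => a) w))
      = B (S.piecewise (fun _ => x) w) := by
    congr 1
    ext j
    by_cases hj : j ∈ S <;> simp [Finset.piecewise, hj]
  have h4 := Finset.sum_erase_add S.powerset
    (fun s => B (s.piecewise (fun _ => x) (S.piecewise (fun _ => a) w)))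
    (Finset.mem_powerset_self S)
  simp only [diffOp, Finset.sum_apply]
  have : B (S.piecewise (fun _ => x + a) w) = ∑ s ∈ S.powerset,
      B (s.piecewise (fun _ => x) (S.piecewise (fun _ => a) w)) := by
    rw [h1, h2]
  rw [this, ← h4]
  beta_reduce
  rw [h3]
  ring

lemma diffOp_gen_mem (a : G) {m : ℕ} {g : G → ℂ} (hg : g ∈ Gen G m) :
    diffOp a g ∈ Submodule.span ℂ (Gen G (m - 1)) := by
  obtain ⟨k, B, S, w, hc, rfl⟩ := hg
  rw [diffOp_gen_eq]
  refine Submodule.sum_mem _ (fun s hs => ?_)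
  refine Submodule.subset_span ?_
  simp only [Finset.mem_erase, Finset.mem_powerset] at hs
  have hlt : s.card < S.card := Finset.card_lt_card (lt_of_le_of_ne hs.2 hs.1)
  exact ⟨k, B, s, _, by omega, rfl⟩

lemma diffOp_span_gen (a : G) {m : ℕ} {h : G → ℂ}
    (hh : h ∈ Submodule.span ℂ (Gen G m)) :
    diffOp a h ∈ Submodule.span ℂ (Gen G (m - 1)) := by
  induction hh using Submodule.span_induction with
  | mem g hg => exact diffOp_gen_mem a hg
  | zero => rw [diffOp_zero]; exact Submodule.zero_mem _
  | add g h _ _ ih1 ih2 => rw [diffOp_add]; exact Submodule.add_mem _ ih1 ih2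
  | smul c g _ ih => rw [diffOp_smul]; exact Submodule.smul_mem _ _ ih

lemma foldr_span_gen (ys : List G) {m : ℕ} {h : G → ℂ}
    (hh : h ∈ Submodule.span ℂ (Gen G m)) :
    ys.foldr diffOp h ∈ Submodule.span ℂ (Gen G (m - ys.length)) := by
  induction ys generalizing m with
  | nil => simpa using hh
  | cons a ys ih =>
      have := diffOp_span_gen a (ih hh)
      exact this

lemma span_gen_zero_le :
    Submodule.span ℂ (Gen G 0) ≤ Submodule.span ℂ {(fun _ => (1:ℂ) : G → ℂ)} := by
  rw [Submodule.span_le]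
  rintro g ⟨k, B, S, w, hc, rfl⟩
  have hS : S = ∅ := Finset.card_eq_zero.mp (Nat.le_zero.mp hc)
  subst hS
  refine Submodule.mem_span_singleton.mpr ⟨B w, ?_⟩
  funext x
  simp [Finset.piecewise]

end Aux
section Aux2
variable {G : Type*} [AddCommGroup G]

lemma translate_mem_span (f : G → ℂ) (a : G) {h : G → ℂ}
    (hh : h ∈ Submodule.span ℂ {g : G → ℂ | ∃ y : G, g = fun x => f (x + y)}) :
    (fun x => h (x + a)) ∈ Submodule.span ℂ {g : G → ℂ | ∃ y : G, g = fun x => f (x + y)} := by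
  induction hh using Submodule.span_induction with
  | mem g hg =>
      obtain ⟨y, rfl⟩ := hg
      exact Submodule.subset_span ⟨a + y, by funext x; show f (x + a + y) = _; rw [add_assoc]⟩
  | zero => exact Submodule.zero_mem _
  | add g h _ _ ih1 ih2 =>
      have : (fun x => (g + h) (x + a)) = (fun x => g (x + a)) + (fun x => h (x + a)) := rfl
      rw [this]; exact Submodule.add_mem _ ih1 ih2
  | smul c g _ ih =>
      have : (fun x => (c • g) (x + a)) = c • (fun x => g (x + a)) := rfl
      rw [this]; exact Submodule.smul_mem _ _ ih

lemma self_mem_span (f : G → ℂ) :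
    f ∈ Submodule.span ℂ {g : G → ℂ | ∃ y : G, g = fun x => f (x + y)} :=
  Submodule.subset_span ⟨0, by funext x; rw [add_zero]⟩

lemma foldr_mem_span (f : G → ℂ) (ys : List G) :
    ys.foldr diffOp f ∈ Submodule.span ℂ {g : G → ℂ | ∃ y : G, g = fun x => f (x + y)} := by
  induction ys with
  | nil => exact self_mem_span f
  | cons a ys ih =>
      have h1 := translate_mem_span f a ih
      have : (a :: ys).foldr diffOp f
          = (fun x => (ys.foldr diffOp f) (x + a)) - ys.foldr diffOp f := rfl
      rw [this]
      exact Submodule.sub_mem _ h1 ih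

lemma foldr_diffOp_add (ys : List G) (g h : G → ℂ) :
    ys.foldr diffOp (g + h) = ys.foldr diffOp g + ys.foldr diffOp h := by
  induction ys with
  | nil => rfl
  | cons a ys ih => simp only [List.foldr_cons, ih, diffOp_add]

end Aux2
section Aux3
variable {G : Type*} [AddCommGroup G]

/-- list of increments `[w (m-1), …, w 1, w 0]`. -/
def incL (w : ℕ → G) : ℕ → List G
  | 0 => []
  | m + 1 => w m :: incL w m

lemma ML (n : ℕ) (hn : 1 ≤ n)
    (B : MultilinearMap ℤ (fun _ : Fin n => G) ℂ)
    (hsymB : ∀ (v : Fin n → G) (σ : Equiv.Perm (Fin n)), B (v ∘ σ) = B v)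
    (y : Fin n → G) (w : ℕ → G)
    (hw : ∀ m (h : m < n), w m = y ⟨n - m - 1, by omega⟩) :
    ∀ m, m ≤ n - 1 →
      ∃ r ∈ Submodule.span ℂ (Gen G (n - m - 1)),
        (incL w m).foldr diffOp (fun x => B (fun _ => x))
          = (n.descFactorial m : ℂ) •
              (fun x => B (fun j => if (j : ℕ) < n - m then x else y j)) + r := by
  intro m
  induction m with
  | zero =>
      intro _
      refine ⟨0, Submodule.zero_mem _, ?_⟩
      simp only [incL, List.foldr_nil, Nat.descFactorial_zero, Nat.cast_one, one_smul,
        Nat.sub_zero, add_zero]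
      funext x
      congr 1
      funext j
      rw [if_pos j.isLt]
  | succ m ih =>
      intro hm1
      obtain ⟨r, hr, heq⟩ := ih (by omega)
      have hmn : m < n := by omega
      have hnm2 : 2 ≤ n - m := by omega
      classical
      set S : Finset (Fin n) := Finset.univ.filter (fun j => (j : ℕ) < n - m) with hSdef
      have hmemS : ∀ j : Fin n, j ∈ S ↔ (j : ℕ) < n - m := by
        intro j; simp [hSdef]
      have hScard : S.card = n - m := by
        have h1 : Finset.map ⟨Fin.val, Fin.val_injective⟩ S = Finset.range (n - m) := by
          ext a
          simp only [hSdef, Finset.mem_map, Finset.mem_filter, Finset.mem_univ, true_and,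
            Function.Embedding.coeFn_mk, Finset.mem_range]
          constructor
          · rintro ⟨j, hj, rfl⟩; exact hj
          · intro ha; exact ⟨⟨a, by omega⟩, ha, rfl⟩
        have h2 := congrArg Finset.card h1
        rwa [Finset.card_map, Finset.card_range] at h2
      -- rewrite the main term in piecewise form
      have hmain : (fun x => B (fun j => if (j : ℕ) < n - m then x else y j))
          = (fun x => B (S.piecewise (fun _ => x) y)) := by
        funext x
        congr 1
        funext j
        by_cases hj : (j : ℕ) < n - m <;>
          simp [Finset.piecewise, hmemS, hj, hSdef]
      -- the new main term
      set main' : G → ℂ :=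
        (fun x => B (fun j => if (j : ℕ) < n - (m + 1) then x else y j)) with hmain'def
      -- every co-rank-one term equals main'
      have hterm : ∀ s ∈ (S.powerset.erase S).filter (fun s => s.card = n - m - 1),
          (fun x => B (s.piecewise (fun _ => x) (S.piecewise (fun _ => w m) y))) = main' := by
        intro s hs
        simp only [Finset.mem_filter, Finset.mem_erase, Finset.mem_powerset] at hs
        obtain ⟨⟨hne, hsub⟩, hcard⟩ := hs
        have hsd : (S \ s).card = 1 := by
          rw [Finset.card_sdiff_of_subset hsub, hScard, hcard]; omega
        obtain ⟨j₀, hj₀⟩ := Finset.card_eq_one.mp hsd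
        have hseq : s = S \ {j₀} := by
          rw [← hj₀, Finset.sdiff_sdiff_eq_self hsub]
        have hj₀S : j₀ ∈ S := by
          have : j₀ ∈ S \ s := hj₀ ▸ Finset.mem_singleton_self j₀
          exact (Finset.mem_sdiff.mp this).1
        have hj₀lt : (j₀ : ℕ) < n - m := (hmemS j₀).mp hj₀S
        set kk : Fin n := ⟨n - m - 1, by omega⟩ with hkk
        have hwk : w m = y kk := hw m hmn
        have hmems : ∀ j : Fin n, j ∈ s ↔ ((j : ℕ) < n - m ∧ j ≠ j₀) := by
          intro j
          rw [hseq, Finset.mem_sdiff, Finset.mem_singleton, hmemS]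
        funext x
        rw [hmain'def]
        have hvec : (fun j : Fin n => if (j : ℕ) < n - (m + 1) then x else y j)
            = (s.piecewise (fun _ => x) (S.piecewise (fun _ => w m) y)) ∘ (Equiv.swap j₀ kk) := by
          funext j
          simp only [Function.comp_apply]
          by_cases h1 : j = j₀
          · rw [h1, Equiv.swap_apply_left]
            by_cases h2 : j₀ = kk
            · have hks : kk ∉ s := by
                rw [hmems]; push_neg; intro _; rw [← h2]
              have hkS : kk ∈ S := by rw [hmemS]; simp only [hkk]; omega
              rw [Finset.piecewise_eq_of_notMem _ _ _ hks,
                Finset.piecewise_eq_of_mem _ _ _ hkS, hwk]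
              rw [if_neg]
              · rw [h2]
              · rw [h2]; simp only [hkk]; omega
            · have hklt : (j₀ : ℕ) < n - (m + 1) := by
                have : (j₀ : ℕ) ≠ n - m - 1 := by
                  intro hc; exact h2 (Fin.ext hc)
                omega
              have hks : kk ∈ s := by
                rw [hmems]
                refine ⟨by simp only [hkk]; omega, fun hc => h2 (by rw [hc])⟩
              rw [Finset.piecewise_eq_of_mem _ _ _ hks, if_pos hklt]
          · by_cases h2 : j = kk
            · rw [h2, Equiv.swap_apply_right]
              have hj₀s : j₀ ∉ s := by rw [hmems]; push_neg; intro _; rfl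
              rw [Finset.piecewise_eq_of_notMem _ _ _ hj₀s,
                Finset.piecewise_eq_of_mem _ _ _ hj₀S, hwk]
              rw [if_neg]
              simp only [hkk]; omega
            · rw [Equiv.swap_apply_of_ne_of_ne h1 h2]
              have hjk : (j : ℕ) ≠ n - m - 1 := by
                intro hc; exact h2 (Fin.ext hc)
              by_cases h3 : (j : ℕ) < n - (m + 1)
              · have hjs : j ∈ s := by rw [hmems]; exact ⟨by omega, h1⟩
                rw [Finset.piecewise_eq_of_mem _ _ _ hjs, if_pos h3]
              · have hjS : j ∉ S := by rw [hmemS]; omega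
                have hjs : j ∉ s := fun hc => hjS (hsub hc)
                rw [Finset.piecewise_eq_of_notMem _ _ _ hjs,
                  Finset.piecewise_eq_of_notMem _ _ _ hjS, if_neg h3]
        show B _ = B fun j : Fin n => if (j : ℕ) < n - (m + 1) then x else y j
        rw [hvec]
        exact (hsymB _ _).symm
      -- the filtered set is the powersetCard set
      have hfil : (S.powerset.erase S).filter (fun s => s.card = n - m - 1)
          = Finset.powersetCard (n - m - 1) S := by
        ext s
        simp only [Finset.mem_filter, Finset.mem_erase, Finset.mem_powerset,
          Finset.mem_powersetCard]
        constructor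
        · rintro ⟨⟨_, h2⟩, h3⟩; exact ⟨h2, h3⟩
        · rintro ⟨h1, h2⟩
          refine ⟨⟨?_, h1⟩, h2⟩
          intro hc
          rw [hc] at h2
          rw [hScard] at h2
          omega
      -- the expansion of the difference of the old main term
      have hexp := diffOp_gen_eq (w m) B S y
      -- split the sum
      rw [← Finset.sum_filter_add_sum_filter_not (S.powerset.erase S)
        (fun s => s.card = n - m - 1)] at hexp
      rw [Finset.sum_congr rfl hterm, hfil, Finset.sum_const, Finset.card_powersetCard,
        hScard] at hexp
      have hch : (n - m).choose (n - m - 1) = n - m := by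
        have h2 : 1 ≤ n - m := by omega
        exact (Nat.choose_symm h2).trans (Nat.choose_one_right _)
      rw [hch] at hexp
      -- second (junk) sum
      set junk : G → ℂ := ∑ s ∈ (S.powerset.erase S).filter (fun s => ¬ s.card = n - m - 1),
          (fun x => B (s.piecewise (fun _ => x) (S.piecewise (fun _ => w m) y))) with hjunkdef
      have hjunk : junk ∈ Submodule.span ℂ (Gen G (n - (m + 1) - 1)) := by
        refine Submodule.sum_mem _ (fun s hs => ?_)
        simp only [Finset.mem_filter, Finset.mem_erase, Finset.mem_powerset] at hs
        obtain ⟨⟨hne, hsub⟩, hcard⟩ := hs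
        have : s.card < S.card := Finset.card_lt_card (lt_of_le_of_ne hsub hne)
        rw [hScard] at this
        exact Submodule.subset_span ⟨n, B, s, _, by omega, rfl⟩
      -- now assemble
      refine ⟨(n.descFactorial m : ℂ) • junk + diffOp (w m) r, ?_, ?_⟩
      · refine Submodule.add_mem _ (Submodule.smul_mem _ _ hjunk) ?_
        have h := diffOp_span_gen (w m) hr
        rwa [show n - m - 1 - 1 = n - (m + 1) - 1 by omega] at h
      · have hstep : (incL w (m + 1)).foldr diffOp (fun x => B (fun _ => x))
            = diffOp (w m) ((incL w m).foldr diffOp (fun x => B (fun _ => x))) := rfl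
        rw [hstep, heq, diffOp_add, diffOp_smul, hmain, hexp]
        rw [Nat.descFactorial_succ]
        push_cast
        rw [smul_add, ← Nat.cast_smul_eq_nsmul ℂ (n - m) main']
        module
end Aux3


lemma incL_length {G : Type*} (w : ℕ → G) : ∀ m, (incL w m).length = m
  | 0 => rfl
  | m + 1 => by simp [incL, incL_length w m]


/-- If `f` is a generalized polynomial of degree `n ≥ 1` with canonical representation
`f(x) = Σ_{k=1}^{n} A_k(x, …, x) + C`, then every additive function
`x ↦ A_n(x, y_2, …, y_n)` belongs to `τ(f)`. -/
theorem topTerm_sections_mem_variety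
    {G : Type*} [AddCommGroup G] (n : ℕ) (hn : 1 ≤ n)
    (A : (k : ℕ) → (Fin k → G) → ℂ) (C : ℂ)
    (hadd : ∀ k, 1 ≤ k → k ≤ n → IsMultiadditive (A k))
    (hsym : ∀ k, 1 ≤ k → k ≤ n → IsSymmetricFn (A k))
    (f : G → ℂ)
    (hrep : ∀ x, f x = (∑ k ∈ Finset.Icc 1 n, A k (fun _ => x)) + C)
    (hdeg : (∀ ys : List G, ys.length = n + 1 → ys.foldr diffOp f = 0) ∧
        ¬ (∀ ys : List G, ys.length = n → ys.foldr diffOp f = 0)) :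
    ∀ y : Fin n → G,
      (fun x => A n (Function.update y (⟨0, hn⟩ : Fin n) x)) ∈ variety f := by
  intro y
  classical
  set T := Submodule.span ℂ {g : G → ℂ | ∃ y : G, g = fun x => f (x + y)} with hT
  suffices hmem : (fun x => A n (Function.update y (⟨0, hn⟩ : Fin n) x)) ∈ T by
    exact Submodule.le_topologicalClosure _ hmem
  -- f lies in the span of generators of degree ≤ n
  have hdiag : ∀ (N k : ℕ), 1 ≤ k → k ≤ n → k ≤ N →
      (fun x => A k (fun _ => x)) ∈ Submodule.span ℂ (Gen G N) := by
    intro N k hk1 hkn hkN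
    refine Submodule.subset_span ⟨k, mkML (hadd k hk1 hkn), Finset.univ, fun _ => 0,
      by simpa using hkN, ?_⟩
    funext x
    show A k _ = A k _
    congr 1
    funext j
    simp [Finset.piecewise]
  have hconst : ∀ (N : ℕ) (c : ℂ),
      (fun _ : G => c) ∈ Submodule.span ℂ (Gen G N) := by
    intro N c
    exact Submodule.subset_span ⟨0, MultilinearMap.constOfIsEmpty ℤ _ c, ∅,
      fun i => i.elim0, by simp, by funext x; rfl⟩
  have hfgen : f ∈ Submodule.span ℂ (Gen G n) := by
    have hfeq : f = (∑ k ∈ Finset.Icc 1 n, fun x => A k (fun _ => x)) + (fun _ => C) := by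
      funext x
      rw [hrep x]
      simp [Finset.sum_apply]
    rw [hfeq]
    refine Submodule.add_mem _ (Submodule.sum_mem _ fun k hk => ?_) (hconst n C)
    rw [Finset.mem_Icc] at hk
    exact hdiag n k hk.1 hk.2 hk.2
  -- the constant function 1 belongs to T
  have h1T : (fun _ : G => (1 : ℂ)) ∈ T := by
    have hd2 := hdeg.2
    push_neg at hd2
    obtain ⟨ys, hlen, hne0⟩ := hd2
    have h0 := foldr_span_gen ys hfgen
    rw [hlen, Nat.sub_self] at h0
    obtain ⟨c₀, hc₀⟩ := Submodule.mem_span_singleton.mp (span_gen_zero_le h0)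
    have hc₀0 : c₀ ≠ 0 := by
      intro hc
      rw [hc, zero_smul] at hc₀
      exact hne0 hc₀.symm
    have : (fun _ : G => (1 : ℂ)) = c₀⁻¹ • ys.foldr diffOp f := by
      rw [← hc₀, smul_smul, inv_mul_cancel₀ hc₀0, one_smul]
    rw [this]
    exact Submodule.smul_mem _ _ (foldr_mem_span f ys)
  -- decompose f
  obtain ⟨n', rfl⟩ : ∃ n', n = n' + 1 := ⟨n - 1, by omega⟩
  set g : G → ℂ := (∑ k ∈ Finset.Icc 1 n', fun x => A k (fun _ => x)) + (fun _ => C)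
    with hgdef
  have hfg : f = (fun x => A (n' + 1) (fun _ => x)) + g := by
    funext x
    rw [hrep x, hgdef]
    rw [Finset.sum_Icc_succ_top (by omega)]
    simp [Finset.sum_apply]
    ring
  have hggen : g ∈ Submodule.span ℂ (Gen G n') := by
    rw [hgdef]
    refine Submodule.add_mem _ (Submodule.sum_mem _ fun k hk => ?_) (hconst n' C)
    rw [Finset.mem_Icc] at hk
    exact hdiag n' k hk.1 (by omega) hk.2
  -- the increments
  set w : ℕ → G := fun i => if h : n' + 1 - i - 1 < n' + 1 then y ⟨n' + 1 - i - 1, h⟩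
    else y ⟨0, hn⟩ with hwdef
  have hw : ∀ m (h : m < n' + 1), w m = y ⟨n' + 1 - m - 1, by omega⟩ := by
    intro m h
    show (if h' : n' + 1 - m - 1 < n' + 1 then y ⟨n' + 1 - m - 1, h'⟩ else y ⟨0, hn⟩) = _
    rw [dif_pos (show n' + 1 - m - 1 < n' + 1 by omega)]
  -- symmetry of A (n'+1) as a multilinear map
  have hA := hadd (n' + 1) (by omega) le_rfl
  have hsymB : ∀ (v : Fin (n' + 1) → G) (σ : Equiv.Perm (Fin (n' + 1))),
      mkML hA (v ∘ σ) = mkML hA v := by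
    intro v σ
    exact hsym (n' + 1) (by omega) le_rfl v σ
  obtain ⟨r, hr, hML⟩ := ML (n' + 1) (by omega) (mkML hA) hsymB y w hw n' (by omega)
  -- main term equals the goal function
  have h00 : ((⟨0, hn⟩ : Fin (n' + 1)) : ℕ) = 0 := rfl
  have hmain : (fun x => A (n' + 1) (fun j : Fin (n' + 1) =>
      if (j : ℕ) < n' + 1 - n' then x else y j))
      = (fun x => A (n' + 1) (Function.update y (⟨0, hn⟩ : Fin (n' + 1)) x)) := by
    funext x
    congr 1
    funext j
    rw [Function.update_apply]
    by_cases hj : (j : ℕ) < n' + 1 - n'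
    · rw [if_pos hj, if_pos (Fin.ext (show (j : ℕ) = ((⟨0, hn⟩ : Fin (n' + 1)) : ℕ) by
        rw [h00]; omega))]
    · rw [if_neg hj, if_neg]
      intro hc
      rw [hc, h00] at hj
      omega
  -- assemble
  set F : G → ℂ := (incL w n').foldr diffOp f with hFdef
  have hFT : F ∈ T := foldr_mem_span f (incL w n')
  have hFsplit : F = ((n' + 1).descFactorial n' : ℂ) •
      (fun x => A (n' + 1) (Function.update y (⟨0, hn⟩ : Fin (n' + 1)) x))
      + (r + (incL w n').foldr diffOp g) := by
    have hML' : (incL w n').foldr diffOp (fun x => A (n' + 1) (fun _ => x))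
        = ((n' + 1).descFactorial n' : ℂ) •
            (fun x => A (n' + 1) (fun j : Fin (n' + 1) =>
              if (j : ℕ) < n' + 1 - n' then x else y j)) + r := hML
    rw [hFdef, hfg, foldr_diffOp_add, hML', hmain]
    abel
  have hρ : (r + (incL w n').foldr diffOp g) ∈ Submodule.span ℂ (Gen G 0) := by
    refine Submodule.add_mem _ ?_ ?_
    · have : n' + 1 - n' - 1 = 0 := by omega
      rwa [this] at hr
    · have h2 := foldr_span_gen (incL w n') hggen
      rwa [incL_length, Nat.sub_self] at h2
  obtain ⟨c, hc⟩ := Submodule.mem_span_singleton.mp (span_gen_zero_le hρ)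
  have hd0 : ((n' + 1).descFactorial n' : ℂ) ≠ 0 := by
    rw [Nat.cast_ne_zero]
    intro hc'
    rw [Nat.descFactorial_eq_zero_iff_lt] at hc'
    omega
  have hfin : (fun x => A (n' + 1) (Function.update y (⟨0, hn⟩ : Fin (n' + 1)) x))
      = ((n' + 1).descFactorial n' : ℂ)⁻¹ • (F - c • (fun _ : G => (1 : ℂ))) := by
    rw [hFsplit, ← hc]
    funext x
    simp only [Pi.smul_apply, Pi.add_apply, Pi.sub_apply, smul_eq_mul]
    field_simp
    ring
  rw [hfin]
  exact Submodule.smul_mem _ _ (Submodule.sub_mem _ hFT (Submodule.smul_mem _ _ h1T))
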